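/- Let $M$ be an $n\times n$ random matrix whose rows are independent and each uniform over binary vectors with exactly $d$ ones, $1\leq d\leq n/2$, and let $X$ denote the number of zero columns of $M$. Then $\mathbb{E}X^2 \leq q + \frac{n-1}{n}q^2$, where $q=n(1-d/n)^n=\mathbb{E}X$. -/

import Mathlib

open MeasureTheory ProbabilityTheory
open scoped ENNReal

lemma nat_ratio (m k : ℕ) (h : k ≤ m) :
    (m + 1) * Nat.choose m (k + 1) = (m - k) * Nat.choose (m + 1) (k + 1) := by
  have h1 : (m + 1) * Nat.choose m k = Nat.choose (m + 1) (k + 1) * (k + 1) :=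
    Nat.add_one_mul_choose_eq m k
  have h2 : Nat.choose (m + 1) (k + 1) = Nat.choose m k + Nat.choose m (k + 1) :=
    Nat.choose_succ_succ _ _
  have key : (m + 1) * Nat.choose m (k + 1) + (k + 1) * Nat.choose (m + 1) (k + 1)
      = (m + 1) * Nat.choose (m + 1) (k + 1) := by
    calc (m + 1) * Nat.choose m (k + 1) + (k + 1) * Nat.choose (m + 1) (k + 1)
        = Nat.choose (m + 1) (k + 1) * (k + 1) + (m + 1) * Nat.choose m (k + 1) := by ring
      _ = (m + 1) * Nat.choose m k + (m + 1) * Nat.choose m (k + 1) := by rw [h1]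
      _ = (m + 1) * (Nat.choose m k + Nat.choose m (k + 1)) := by ring
      _ = (m + 1) * Nat.choose (m + 1) (k + 1) := by rw [← h2]
  have h3 : (m - k) * Nat.choose (m + 1) (k + 1)
      = (m + 1) * Nat.choose (m + 1) (k + 1) - (k + 1) * Nat.choose (m + 1) (k + 1) := by
    rw [← Nat.sub_mul]; congr 1; omega
  rw [h3, ← key, Nat.add_sub_cancel]

lemma ratio_real (n d : ℕ) (hd : 1 ≤ d) (hdn : d ≤ n) :
    (Nat.choose (n - 1) d : ℝ) / Nat.choose n d = ((n : ℝ) - d) / n := by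
  obtain ⟨m, rfl⟩ : ∃ m, n = m + 1 := ⟨n - 1, by omega⟩
  obtain ⟨k, rfl⟩ : ∃ k, d = k + 1 := ⟨d - 1, by omega⟩
  have hk : k ≤ m := by omega
  have key := nat_ratio m k hk
  have hC : (0 : ℝ) < Nat.choose (m + 1) (k + 1) :=
    Nat.cast_pos.2 (Nat.choose_pos (by omega))
  have hn : (0 : ℝ) < (m : ℝ) + 1 := by positivity
  have keyR : ((m : ℝ) + 1) * Nat.choose m (k + 1)
      = ((m : ℝ) - k) * Nat.choose (m + 1) (k + 1) := by
    have := congrArg (Nat.cast : ℕ → ℝ) key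
    push_cast [Nat.cast_sub hk] at this
    convert this using 2 <;> push_cast <;> ring
  simp only [Nat.add_sub_cancel]
  rw [div_eq_div_iff (ne_of_gt hC) (by push_cast; linarith)]
  push_cast
  nlinarith [keyR]
open MeasureTheory ProbabilityTheory
open scoped ENNReal

lemma pre_measure {Ω : Type*} [MeasureSpace Ω] {n : ℕ} (S : Finset (Fin n → Bool))
    (f : Ω → (Fin n → Bool)) (hf : Measurable f)
    (hunif : ∀ v, ℙ {ω | f ω = v} = if v ∈ S then ((S.card : ℝ≥0∞))⁻¹ else 0)
    (p : (Fin n → Bool) → Prop) [DecidablePred p] :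
    ℙ (f ⁻¹' {v | p v}) = ((S.filter p).card : ℝ≥0∞) * ((S.card : ℝ≥0∞))⁻¹ := by
  have hU : f ⁻¹' {v | p v} = ⋃ v ∈ (Finset.univ.filter p : Finset (Fin n → Bool)), f ⁻¹' {v} := by
    ext ω; simp
  rw [hU, measure_biUnion_finset]
  · have hsingle : ∀ v : Fin n → Bool, f ⁻¹' {v} = {ω | f ω = v} := by
      intro v; ext ω; simp [Set.mem_preimage]
    calc ∑ v ∈ Finset.univ.filter p, ℙ (f ⁻¹' {v})
        = ∑ v ∈ Finset.univ.filter p, if v ∈ S then ((S.card : ℝ≥0∞))⁻¹ else 0 := by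
          refine Finset.sum_congr rfl fun v _ => ?_; rw [hsingle, hunif]
      _ = ∑ v ∈ (Finset.univ.filter p) ∩ S, ((S.card : ℝ≥0∞))⁻¹ := Finset.sum_ite_mem _ _ _
      _ = ((S.filter p).card : ℝ≥0∞) * ((S.card : ℝ≥0∞))⁻¹ := by
          have he : Finset.univ.filter p ∩ S = S.filter p := by
            ext v; simp [and_comm]
          rw [Finset.sum_const, he, nsmul_eq_mul]
  · intro a ha b hb hab
    refine Set.disjoint_left.2 fun ω h1 h2 => hab ?_
    simp only [Set.mem_preimage, Set.mem_singleton_iff] at h1 h2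
    rw [← h1, ← h2]
  · exact fun v _ => hf (measurableSet_singleton v)
lemma count_aux (n d : ℕ) (T : Finset (Fin n)) :
    (Finset.univ.filter (fun v : Fin n → Bool =>
      (Finset.univ.filter (fun j => v j = true)).card = d ∧ ∀ j ∈ T, v j = false)).card
    = ((Finset.univ \ T : Finset (Fin n)).card).choose d := by
  rw [← Finset.card_powersetCard]
  apply Finset.card_bij' (fun v _ => Finset.univ.filter (fun j => v j = true))
    (fun s _ => fun j => decide (j ∈ s))
  · intro v _
    funext j
    simp only [Finset.mem_filter, Finset.mem_univ, true_and]
    cases h : v j <;> simp [h]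
  · intro s _
    ext j
    simp
  · intro v hv
    simp only [Finset.mem_filter, Finset.mem_univ, true_and] at hv
    rw [Finset.mem_powersetCard]
    refine ⟨fun j hj => ?_, hv.1⟩
    simp only [Finset.mem_filter, Finset.mem_univ, true_and] at hj
    simp only [Finset.mem_sdiff, Finset.mem_univ, true_and]
    intro hT
    exact absurd (hv.2 j hT) (by simp [hj])
  · intro s hs
    rw [Finset.mem_powersetCard] at hs
    simp only [Finset.mem_filter, Finset.mem_univ, true_and]
    constructor
    · rw [← hs.2]; congr 1; ext j; simp
    · intro j hj
      simp only [decide_eq_false_iff_not]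
      intro hjs
      have h2 := hs.1 hjs
      simp only [Finset.mem_sdiff, Finset.mem_univ, true_and] at h2
      exact h2 hj

theorem second_moment_zero_columns
    {Ω : Type*} [MeasureSpace Ω] [IsProbabilityMeasure (ℙ : Measure Ω)]
    (n d : ℕ) (hd1 : 1 ≤ d) (hdn : 2 * d ≤ n)
    (S : Finset (Fin n → Bool))
    (hS : S = Finset.univ.filter
      (fun v : Fin n → Bool => (Finset.univ.filter (fun j => v j = true)).card = d))
    (M : Fin n → Ω → (Fin n → Bool))
    (hmeas : ∀ i, Measurable (M i))
    (hind : iIndepFun M ℙ)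
    (hunif : ∀ i, ∀ v : Fin n → Bool,
      ℙ {ω | M i ω = v} = if v ∈ S then ((S.card : ℝ≥0∞))⁻¹ else 0)
    (q : ℝ) (hq : q = n * (1 - (d : ℝ) / n) ^ n) :
    ∫ ω, (((Finset.univ.filter
        (fun j : Fin n => ∀ i, M i ω j = false)).card : ℝ)) ^ 2 ∂ℙ ≤
      q + ((n : ℝ) - 1) / n * q ^ 2 := by
  classical
  have hn2 : 2 ≤ n := by omega
  have hn0 : (0 : ℝ) < n := by exact_mod_cast (by omega : 0 < n)
  set A : Fin n → Fin n → Set Ω :=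
    fun j k => ⋂ i, M i ⁻¹' {v : Fin n → Bool | v j = false ∧ v k = false} with hA
  have hAmeas : ∀ j k, MeasurableSet (A j k) :=
    fun j k => MeasurableSet.iInter fun i => (hmeas i) .of_discrete
  -- pointwise expansion of the square
  have hpt : ∀ ω, (((Finset.univ.filter (fun j : Fin n => ∀ i, M i ω j = false)).card : ℝ)) ^ 2
      = ∑ j, ∑ k, (A j k).indicator (fun _ => (1 : ℝ)) ω := by
    intro ω
    have h1 : ((Finset.univ.filter (fun j : Fin n => ∀ i, M i ω j = false)).card : ℝ)
        = ∑ j, if (∀ i, M i ω j = false) then (1 : ℝ) else 0 := by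
      rw [Finset.card_filter]; push_cast; rfl
    rw [h1, sq, Finset.sum_mul_sum]
    refine Finset.sum_congr rfl fun j _ => Finset.sum_congr rfl fun k _ => ?_
    have hmem : ω ∈ A j k ↔ (∀ i, M i ω j = false) ∧ (∀ i, M i ω k = false) := by
      simp only [hA, Set.mem_iInter, Set.mem_preimage, Set.mem_setOf_eq]
      exact forall_and
    rw [Set.indicator_apply]
    by_cases h1' : (∀ i, M i ω j = false) <;> by_cases h2' : (∀ i, M i ω k = false) <;>
      simp [h1', h2', hmem]
  have hint : ∀ j k, Integrable ((A j k).indicator (fun _ => (1 : ℝ))) ℙ :=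
    fun j k => (integrable_const (1 : ℝ)).indicator (hAmeas j k)
  -- independence: probability of A j k
  have hprob : ∀ j k, ℙ (A j k)
      = (((S.filter (fun v => v j = false ∧ v k = false)).card : ℝ≥0∞)
          * ((S.card : ℝ≥0∞))⁻¹) ^ n := by
    intro j k
    have h1 : ℙ (A j k) = ∏ i, ℙ (M i ⁻¹' {v : Fin n → Bool | v j = false ∧ v k = false}) := by
      rw [hA]
      exact hind.meas_iInter fun i =>
        ⟨{v : Fin n → Bool | v j = false ∧ v k = false}, .of_discrete, rfl⟩
    rw [h1]
    have h2 : ∀ i : Fin n, ℙ (M i ⁻¹' {v : Fin n → Bool | v j = false ∧ v k = false})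
        = ((S.filter (fun v => v j = false ∧ v k = false)).card : ℝ≥0∞)
          * ((S.card : ℝ≥0∞))⁻¹ :=
      fun i => pre_measure S (M i) (hmeas i) (hunif i) (fun v => v j = false ∧ v k = false)
    simp_rw [h2]
    rw [Finset.prod_const, Finset.card_univ, Fintype.card_fin]
  -- counting
  have hScard : S.card = n.choose d := by
    have h := count_aux n d ∅
    simp only [Finset.sdiff_empty, Finset.card_univ, Fintype.card_fin,
      Finset.notMem_empty, false_implies, implies_true, and_true] at h
    rw [hS]; exact h
  have hcount1 : ∀ j : Fin n,
      (S.filter (fun v => v j = false ∧ v j = false)).card = (n - 1).choose d := by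
    intro j
    have h := count_aux n d {j}
    rw [hS, Finset.filter_filter]
    have he : (Finset.univ.filter (fun v : Fin n → Bool =>
        (Finset.univ.filter (fun i => v i = true)).card = d ∧ (v j = false ∧ v j = false)))
        = Finset.univ.filter (fun v : Fin n → Bool =>
        (Finset.univ.filter (fun i => v i = true)).card = d ∧ ∀ x ∈ ({j} : Finset (Fin n)), v x = false) := by
      ext v; simp
    rw [he, h]
    congr 1
    rw [Finset.card_sdiff_of_subset (Finset.subset_univ _), Finset.card_univ, Fintype.card_fin,
      Finset.card_singleton]
  have hcount2 : ∀ j k : Fin n, j ≠ k →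
      (S.filter (fun v => v j = false ∧ v k = false)).card = (n - 2).choose d := by
    intro j k hjk
    have h := count_aux n d {j, k}
    rw [hS, Finset.filter_filter]
    have he : (Finset.univ.filter (fun v : Fin n → Bool =>
        (Finset.univ.filter (fun i => v i = true)).card = d ∧ (v j = false ∧ v k = false)))
        = Finset.univ.filter (fun v : Fin n → Bool =>
        (Finset.univ.filter (fun i => v i = true)).card = d ∧ ∀ x ∈ ({j, k} : Finset (Fin n)), v x = false) := by
      ext v
      simp only [Finset.mem_filter, Finset.mem_univ, true_and, Finset.mem_insert,
        Finset.mem_singleton]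
      constructor
      · rintro ⟨h1, h2, h3⟩
        exact ⟨h1, by rintro x (rfl | rfl) <;> assumption⟩
      · rintro ⟨h1, h2⟩
        exact ⟨h1, h2 j (Or.inl rfl), h2 k (Or.inr rfl)⟩
    rw [he, h]
    congr 1
    rw [Finset.card_sdiff_of_subset (Finset.subset_univ _), Finset.card_univ, Fintype.card_fin,
      Finset.card_insert_of_notMem (by simpa using hjk), Finset.card_singleton]
  -- real-valued probabilities
  have htoReal : ∀ j k, (ℙ (A j k)).toReal
      = (((S.filter (fun v => v j = false ∧ v k = false)).card : ℝ) / S.card) ^ n := by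
    intro j k
    rw [hprob j k, ENNReal.toReal_pow, ENNReal.toReal_mul, ENNReal.toReal_inv,
      ENNReal.toReal_natCast, ENNReal.toReal_natCast, div_eq_mul_inv]
  set r : ℝ := ((n : ℝ) - d) / n with hr
  have hr0 : 0 ≤ r := by
    rw [hr]; apply div_nonneg _ (le_of_lt hn0)
    have : (d : ℝ) ≤ n := by exact_mod_cast (by omega : d ≤ n)
    linarith
  have hdiag : ∀ j, (ℙ (A j j)).toReal = r ^ n := by
    intro j
    rw [htoReal, hcount1 j, hScard, ratio_real n d hd1 (by omega), hr]
  have hC1 : (0 : ℝ) < (n - 1).choose d :=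
    Nat.cast_pos.2 (Nat.choose_pos (by omega))
  have hC0 : (0 : ℝ) < n.choose d := Nat.cast_pos.2 (Nat.choose_pos (by omega))
  have hratio2 : ((n - 2).choose d : ℝ) / n.choose d ≤ r ^ 2 := by
    have e : ((n - 2).choose d : ℝ) / n.choose d
        = (((n - 2).choose d : ℝ) / (n - 1).choose d) * (((n - 1).choose d : ℝ) / n.choose d) := by
      field_simp
    have e2 : ((n - 2).choose d : ℝ) / (n - 1).choose d
        = (((n - 1 : ℕ) : ℝ) - d) / ((n - 1 : ℕ) : ℝ) := by
      have h := ratio_real (n - 1) d hd1 (by omega)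
      rwa [show n - 1 - 1 = n - 2 from by omega] at h
    rw [e, e2, ratio_real n d hd1 (by omega), sq]
    refine mul_le_mul_of_nonneg_right ?_ hr0
    have hcast : ((n - 1 : ℕ) : ℝ) = (n : ℝ) - 1 := by
      push_cast [Nat.cast_sub (by omega : 1 ≤ n)]; ring
    have hn2' : (2 : ℝ) ≤ n := by exact_mod_cast hn2
    rw [hcast, div_le_div_iff₀ (by linarith) hn0]
    have hdn' : (d : ℝ) ≥ 0 := Nat.cast_nonneg d
    nlinarith
  have hoff : ∀ j k, j ≠ k → (ℙ (A j k)).toReal ≤ r ^ (2 * n) := by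
    intro j k hjk
    rw [htoReal, hcount2 j k hjk, hScard]
    calc (((n - 2).choose d : ℝ) / n.choose d) ^ n
        ≤ (r ^ 2) ^ n := pow_le_pow_left₀ (by positivity) hratio2 n
      _ = r ^ (2 * n) := by rw [← pow_mul]
  -- put everything together
  calc ∫ ω, (((Finset.univ.filter (fun j : Fin n => ∀ i, M i ω j = false)).card : ℝ)) ^ 2 ∂ℙ
      = ∫ ω, ∑ j, ∑ k, (A j k).indicator (fun _ => (1 : ℝ)) ω ∂ℙ :=
        integral_congr_ae (Filter.Eventually.of_forall hpt)
    _ = ∑ j, ∑ k, (ℙ (A j k)).toReal := by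
        rw [integral_finset_sum _ (fun j _ => integrable_finset_sum _ (fun k _ => hint j k))]
        refine Finset.sum_congr rfl fun j _ => ?_
        rw [integral_finset_sum _ (fun k _ => hint j k)]
        refine Finset.sum_congr rfl fun k _ => ?_
        rw [integral_indicator_const (1 : ℝ) (hAmeas j k), smul_eq_mul, mul_one, measureReal_def]
    _ ≤ ∑ j : Fin n, ∑ k : Fin n, (if j = k then r ^ n else r ^ (2 * n)) := by
        refine Finset.sum_le_sum fun j _ => Finset.sum_le_sum fun k _ => ?_
        by_cases h : j = k
        · subst h; simp [hdiag j]
        · simpa [h] using hoff j k h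
    _ = ∑ j : Fin n, (r ^ n + ((n : ℝ) - 1) * r ^ (2 * n)) := by
        refine Finset.sum_congr rfl fun j _ => ?_
        have hfe : (fun k => if j = k then r ^ n else r ^ (2 * n))
            = fun k => r ^ (2 * n) + (if j = k then r ^ n - r ^ (2 * n) else 0) := by
          funext k; split_ifs <;> ring
        rw [hfe, Finset.sum_add_distrib, Finset.sum_const, Finset.sum_ite_eq,
          Finset.card_univ, Fintype.card_fin]
        simp only [Finset.mem_univ, if_true, nsmul_eq_mul]
        ring
    _ = q + ((n : ℝ) - 1) / n * q ^ 2 := by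
        rw [Finset.sum_const, Finset.card_univ, Fintype.card_fin, nsmul_eq_mul]
        have hrq : (1 - (d : ℝ) / n) = r := by rw [hr]; field_simp
        rw [hq, hrq]
        have h2n : r ^ (2 * n) = r ^ n * r ^ n := by rw [two_mul, pow_add]
        rw [h2n]
        field_simp
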